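/- The maps π° ↦ I(π°) (sending a decorated permutation to its sequence of shifted anti-exceedance sets) and I ↦ π°(I) (constructing a decorated permutation from a Grassmann necklace) are mutually inverse, giving a bijection between decorated permutations of size n and Grassmann necklaces of size n. -/

import Mathlib

/-- A decorated permutation of size `n`: a permutation of `Fin n` together with a coloring
of its fixed points in two colors (`true` = black = 1, `false` = white = -1). -/
structure DecoratedPerm (n : ℕ) where
  perm : Equiv.Perm (Fin n)
  col : {i : Fin n // perm i = i} → Bool

/-- The position of `i` in the cyclically shifted linear order
`r <_r r+1 <_r ⋯ <_r n-1 <_r 0 <_r ⋯ <_r r-1` on `Fin n`. -/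
def shiftVal (n : ℕ) (r i : Fin n) : ℕ := ((i : ℕ) + n - (r : ℕ)) % n

open Classical in
/-- The sequence of shifted anti-exceedance sets of a decorated permutation:
`I_r(π°) = { i | i <_r π⁻¹(i), or π(i) = i and i is colored white }`. -/
noncomputable def necklaceOf {n : ℕ} (σ : DecoratedPerm n) : Fin n → Finset (Fin n) :=
  fun r => Finset.univ.filter fun i =>
    shiftVal n r i < shiftVal n r (σ.perm.symm i) ∨ ∃ h : σ.perm i = i, σ.col ⟨i, h⟩ = false

/-- A Grassmann necklace: a sequence `(I_0, …, I_{n-1})` of subsets of `Fin n` such that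
(indices mod `n`) if `i ∈ I_i` then `I_{i+1} = (I_i \ {i}) ∪ {j}` for some `j`, and if
`i ∉ I_i` then `I_{i+1} = I_i`. -/
def IsGrassmannNecklace {n : ℕ} [NeZero n] (I : Fin n → Finset (Fin n)) : Prop :=
  ∀ i : Fin n, (i ∈ I i → ∃ j : Fin n, I (i + 1) = insert j ((I i).erase i)) ∧
    (i ∉ I i → I (i + 1) = I i)

/-- The decorated permutation `π°(I)` constructed from a Grassmann necklace `I`:
`π(i) = j` if `I_{i+1} = (I_i \ {i}) ∪ {j}` with `j ≠ i`; `π(i) = i` colored black if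
`I_{i+1} = I_i` and `i ∉ I_i`; `π(i) = i` colored white if `I_{i+1} = I_i` and `i ∈ I_i`. -/
def DecodesTo {n : ℕ} [NeZero n] (I : Fin n → Finset (Fin n)) (σ : DecoratedPerm n) : Prop :=
  ∀ i : Fin n,
    if h : σ.perm i = i then
      I (i + 1) = I i ∧ (σ.col ⟨i, h⟩ = false ↔ i ∈ I i)
    else I (i + 1) = insert (σ.perm i) ((I i).erase i)

namespace GNProof

set_option linter.unusedSectionVars false

/-! ### Arithmetic lemmas on `shiftVal` -/

variable {n : ℕ}

lemma shiftVal_closed (r i : Fin n) :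
    shiftVal n r i = if (r:ℕ) ≤ (i:ℕ) then (i:ℕ) - r else (i:ℕ) + n - r := by
  unfold shiftVal
  have hi := i.isLt; have hr := r.isLt
  split
  · next h =>
    have he : (i:ℕ) + n - r = ((i:ℕ) - r) + n := by omega
    rw [he, Nat.add_mod_right, Nat.mod_eq_of_lt (by omega)]
  · next h => rw [Nat.mod_eq_of_lt (by omega)]

lemma val_succ [NeZero n] (r : Fin n) :
    ((r + 1 : Fin n) : ℕ) = if (r:ℕ) + 1 = n then 0 else (r:ℕ) + 1 := by
  rw [Fin.val_add, Fin.val_one', Nat.add_mod_mod]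
  split
  · next h => rw [h, Nat.mod_self]
  · next h => exact Nat.mod_eq_of_lt (by have := r.isLt; omega)

lemma shiftVal_self (r : Fin n) : shiftVal n r r = 0 := by
  rw [shiftVal_closed]; simp

lemma shiftVal_lt (r i : Fin n) : shiftVal n r i < n := by
  rw [shiftVal_closed]; have := i.isLt; have := r.isLt; split <;> omega

lemma shiftVal_pos {r i : Fin n} (h : i ≠ r) : 0 < shiftVal n r i := by
  have hv : (i:ℕ) ≠ (r:ℕ) := fun hv => h (Fin.ext hv)
  rw [shiftVal_closed]; have := i.isLt; have := r.isLt; split <;> omega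

lemma shiftVal_succ_self [NeZero n] (r : Fin n) : shiftVal n (r+1) r = n - 1 := by
  rw [shiftVal_closed, val_succ]
  have := r.isLt; split_ifs <;> omega

lemma shiftVal_succ_ne [NeZero n] {r i : Fin n} (h : i ≠ r) :
    shiftVal n (r+1) i + 1 = shiftVal n r i := by
  have hv : (i:ℕ) ≠ (r:ℕ) := fun hv => h (Fin.ext hv)
  rw [shiftVal_closed, shiftVal_closed, val_succ]
  have := r.isLt; have := i.isLt; split_ifs <;> omega

lemma shiftVal_eq_sub_val [NeZero n] (v k : Fin n) : shiftVal n v k = ((k - v : Fin n) : ℕ) := by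
  rw [Fin.sub_def]
  unfold shiftVal
  congr 1
  have := v.isLt
  omega

lemma arith [NeZero n] (a b k : Fin n) (hab : a ≠ b) (hka : k ≠ a) (hkb : k ≠ b) :
    ¬(shiftVal n (a+1) k < shiftVal n (a+1) b ∧ shiftVal n (b+1) k < shiftVal n (b+1) a) := by
  have h1 : (a:ℕ) ≠ (b:ℕ) := fun h => hab (Fin.ext h)
  have h2 : (k:ℕ) ≠ (a:ℕ) := fun h => hka (Fin.ext h)
  have h3 : (k:ℕ) ≠ (b:ℕ) := fun h => hkb (Fin.ext h)
  have ha := a.isLt; have hb := b.isLt; have hk := k.isLt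
  rw [shiftVal_closed (a+1) k, shiftVal_closed (a+1) b, shiftVal_closed (b+1) k,
    shiftVal_closed (b+1) a, val_succ a, val_succ b]
  split_ifs <;> omega

open Fin.NatCast Fin.CommRing in
lemma fin_add_sub_val [NeZero n] (a b : Fin n) : a + ((((b - a : Fin n)) : ℕ) : Fin n) = b := by
  rw [Fin.cast_val_eq_self, add_comm, sub_add_cancel]

open Fin.NatCast Fin.CommRing in
lemma fin_reach [NeZero n] (base : Fin n) (P : Fin n → Prop) (h0 : P base)
    (hstep : ∀ r, P r → P (r+1)) : ∀ r, P r := by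
  have key : ∀ m : ℕ, P (base + (m : Fin n)) := by
    intro m
    induction m with
    | zero => simpa using h0
    | succ p ih =>
      have := hstep _ ih
      have he : base + ((p+1 : ℕ) : Fin n) = (base + (p : Fin n)) + 1 := by
        push_cast; ring
      rwa [he]
  intro r
  have := key ((r - base : Fin n) : ℕ)
  rwa [fin_add_sub_val] at this

/-! ### Membership lemmas for `necklaceOf` -/

variable {σ σ' : DecoratedPerm n}

lemma mem_necklaceOf {r j : Fin n} :
    j ∈ necklaceOf σ r ↔
      shiftVal n r j < shiftVal n r (σ.perm.symm j) ∨ ∃ h : σ.perm j = j, σ.col ⟨j, h⟩ = false := by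
  simp [necklaceOf]

lemma symm_ne_self {i : Fin n} (h : σ.perm i ≠ i) : σ.perm.symm i ≠ i := by
  intro he
  exact h (by conv_lhs => rw [← he, Equiv.apply_symm_apply])

lemma self_mem_self {i : Fin n} (h : σ.perm i ≠ i) : i ∈ necklaceOf σ i := by
  rw [mem_necklaceOf]
  exact Or.inl (by rw [shiftVal_self]; exact shiftVal_pos (symm_ne_self h))

lemma mem_self_iff {i : Fin n} (h : σ.perm i = i) :
    i ∈ necklaceOf σ i ↔ σ.col ⟨i, h⟩ = false := by
  rw [mem_necklaceOf]
  have hs : σ.perm.symm i = i := by rw [Equiv.symm_apply_eq]; exact h.symm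
  constructor
  · rintro (hl | ⟨h', hc⟩)
    · rw [hs] at hl; exact absurd hl (lt_irrefl _)
    · exact hc
  · intro hc; exact Or.inr ⟨h, hc⟩

lemma shiftVal_succ_lt_top [NeZero n] {i j : Fin n} (h : j ≠ i) :
    shiftVal n (i+1) j < n - 1 := by
  have h1 := shiftVal_succ_ne h
  have h2 := shiftVal_lt i j
  have hn : 2 ≤ n := by
    rcases Nat.lt_or_ge n 2 with hl | hl
    · interval_cases n
      · exact absurd j.isLt (by omega)
      · exact absurd (Subsingleton.elim j i) h
    · exact hl
  omega

lemma self_not_mem_succ [NeZero n] {i : Fin n} (h : σ.perm i ≠ i) :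
    i ∉ necklaceOf σ (i+1) := by
  rw [mem_necklaceOf]
  rintro (hl | ⟨h', _⟩)
  · rw [shiftVal_succ_self] at hl
    have := shiftVal_succ_lt_top (symm_ne_self h)
    omega
  · exact h h'

lemma perm_mem_succ [NeZero n] {i : Fin n} (h : σ.perm i ≠ i) :
    σ.perm i ∈ necklaceOf σ (i+1) := by
  rw [mem_necklaceOf]
  refine Or.inl ?_
  rw [Equiv.symm_apply_apply, shiftVal_succ_self]
  exact shiftVal_succ_lt_top h

lemma perm_not_mem_self {i : Fin n} (h : σ.perm i ≠ i) :
    σ.perm i ∉ necklaceOf σ i := by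
  rw [mem_necklaceOf]
  rintro (hl | ⟨h', _⟩)
  · rw [Equiv.symm_apply_apply, shiftVal_self] at hl; omega
  · exact h (σ.perm.injective h')

lemma mem_succ_iff [NeZero n] {i j : Fin n} (hj : j ≠ i) (hj' : σ.perm.symm j ≠ i) :
    j ∈ necklaceOf σ (i+1) ↔ j ∈ necklaceOf σ i := by
  rw [mem_necklaceOf, mem_necklaceOf]
  have h1 := shiftVal_succ_ne (n := n) hj
  have h2 := shiftVal_succ_ne (n := n) hj'
  constructor <;> rintro (hl | hr) <;> [skip; exact Or.inr hr; skip; exact Or.inr hr] <;>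
    exact Or.inl (by omega)

lemma self_mem_succ_iff [NeZero n] {i : Fin n} (h : σ.perm i = i) :
    i ∈ necklaceOf σ (i+1) ↔ σ.col ⟨i, h⟩ = false := by
  rw [mem_necklaceOf]
  have hs : σ.perm.symm i = i := by rw [Equiv.symm_apply_eq]; exact h.symm
  constructor
  · rintro (hl | ⟨h', hc⟩)
    · rw [hs] at hl; exact absurd hl (lt_irrefl _)
    · exact hc
  · intro hc; exact Or.inr ⟨h, hc⟩

/-! ### Part 1: `necklaceOf σ` decodes to `σ` and is a Grassmann necklace -/

lemma decodesTo_necklaceOf [NeZero n] (σ : DecoratedPerm n) : DecodesTo (necklaceOf σ) σ := by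
  intro i
  by_cases h : σ.perm i = i
  · rw [dif_pos h]
    constructor
    · ext j
      by_cases hj : j = i
      · subst hj
        rw [self_mem_succ_iff h, mem_self_iff h]
      · have hj' : σ.perm.symm j ≠ i := by
          intro he
          apply hj
          have : σ.perm (σ.perm.symm j) = σ.perm i := by rw [he]
          rw [Equiv.apply_symm_apply, h] at this
          exact this
        exact mem_succ_iff hj hj'
    · exact (mem_self_iff h).symm
  · rw [dif_neg h]
    ext j
    by_cases hj : j = i
    · subst hj
      simp only [Finset.mem_insert, Finset.mem_erase]
      constructor
      · intro hm; exact absurd hm (self_not_mem_succ h)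
      · rintro (he | ⟨hne, _⟩)
        · exact absurd he.symm h
        · exact absurd rfl hne
    · by_cases hjs : j = σ.perm i
      · subst hjs
        exact ⟨fun _ => Finset.mem_insert_self _ _, fun _ => perm_mem_succ h⟩
      · have hj' : σ.perm.symm j ≠ i := by
          intro he
          apply hjs
          rw [← he, Equiv.apply_symm_apply]
        rw [mem_succ_iff hj hj']
        simp only [Finset.mem_insert, Finset.mem_erase]
        constructor
        · intro hm; exact Or.inr ⟨hj, hm⟩
        · rintro (he | ⟨_, hm⟩)
          · exact absurd he hjs
          · exact hm

lemma grassmann_necklaceOf [NeZero n] (σ : DecoratedPerm n) :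
    IsGrassmannNecklace (necklaceOf σ) := by
  intro i
  have hd := decodesTo_necklaceOf σ i
  constructor
  · intro hi
    by_cases h : σ.perm i = i
    · rw [dif_pos h] at hd
      exact ⟨i, by rw [hd.1, Finset.insert_erase hi]⟩
    · rw [dif_neg h] at hd
      exact ⟨σ.perm i, hd⟩
  · intro hi
    have h : σ.perm i = i := by
      by_contra h
      exact hi (self_mem_self h)
    rw [dif_pos h] at hd
    exact hd.1

/-! ### Decoding determines the necklace -/

lemma decodes_unique [NeZero n] {I I' : Fin n → Finset (Fin n)}
    (h : DecodesTo I σ) (h' : DecodesTo I' σ) : I = I' := by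
  funext r
  ext k
  revert r
  have step : ∀ r, (k ∈ I r ↔ k ∈ I' r) → (k ∈ I (r+1) ↔ k ∈ I' (r+1)) := by
    intro r hr
    have hd := h r; have hd' := h' r
    by_cases hfix : σ.perm r = r
    · rw [dif_pos hfix] at hd hd'
      rw [hd.1, hd'.1]; exact hr
    · rw [dif_neg hfix] at hd hd'
      rw [hd, hd']
      simp only [Finset.mem_insert, Finset.mem_erase, hr]
  by_cases hk : σ.perm k = k
  · have base : k ∈ I k ↔ k ∈ I' k := by
      have hd := h k; have hd' := h' k
      rw [dif_pos hk] at hd hd'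
      rw [← hd.2, ← hd'.2]
    exact fin_reach k _ base step
  · have base : k ∈ I (k+1) ↔ k ∈ I' (k+1) := by
      have hd := h k; have hd' := h' k
      rw [dif_neg hk] at hd hd'
      rw [hd, hd']
      simp only [Finset.mem_insert, Finset.mem_erase]
      have : ¬ (k = σ.perm k) := fun he => hk he.symm
      simp [this]
    exact fin_reach (k+1) _ base step

lemma decodes_necklace [NeZero n] {I : Fin n → Finset (Fin n)} (hd : DecodesTo I σ) :
    necklaceOf σ = I :=
  decodes_unique (decodesTo_necklaceOf σ) hd

/-! ### Part 2: construction of the decorated permutation from a necklace -/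

variable {I : Fin n → Finset (Fin n)}

lemma card_le_succ [NeZero n] (hI : IsGrassmannNecklace I) (r : Fin n) :
    (I (r+1)).card ≤ (I r).card := by
  by_cases hr : r ∈ I r
  · obtain ⟨j, hj⟩ := (hI r).1 hr
    rw [hj]
    calc (insert j ((I r).erase r)).card ≤ ((I r).erase r).card + 1 := Finset.card_insert_le _ _
      _ = ((I r).card - 1) + 1 := by rw [Finset.card_erase_of_mem hr]
      _ ≤ (I r).card := by have := Finset.card_pos.mpr ⟨r, hr⟩; omega
  · rw [(hI r).2 hr]

lemma card_eq [NeZero n] (hI : IsGrassmannNecklace I) (a b : Fin n) :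
    (I a).card = (I b).card := by
  have key : ∀ a b : Fin n, (I b).card ≤ (I a).card := by
    intro a
    exact fin_reach a (fun r => (I r).card ≤ (I a).card) le_rfl
      (fun r hr => le_trans (card_le_succ hI r) hr)
  exact le_antisymm (key b a) (key a b)

open Classical in
/-- The underlying function of the permutation decoded from a necklace. -/
noncomputable def fI [NeZero n] (I : Fin n → Finset (Fin n)) : Fin n → Fin n :=
  fun i => if h : ∃ j, j ∈ I (i+1) \ I i then h.choose else i

lemma necklace_step [NeZero n] (hI : IsGrassmannNecklace I) (i : Fin n) :
    (I (i+1) = I i ∧ fI I i = i) ∨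
    (fI I i ≠ i ∧ i ∈ I i ∧ fI I i ∉ I i ∧ I (i+1) = insert (fI I i) ((I i).erase i)) := by
  classical
  by_cases hne : ∃ j, j ∈ I (i+1) \ I i
  · right
    obtain ⟨c, hc, hfi⟩ : ∃ c, c ∈ I (i+1) \ I i ∧ fI I i = c :=
      ⟨hne.choose, hne.choose_spec, dif_pos hne⟩
    obtain ⟨hj1, hj2⟩ := Finset.mem_sdiff.mp hc
    have hi : i ∈ I i := by
      by_contra hi
      rw [(hI i).2 hi] at hj1
      exact hj2 hj1
    obtain ⟨j', hj'⟩ := (hI i).1 hi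
    have hj'notin : j' ∉ I i := by
      by_contra hj'I
      have hsub : I (i+1) ⊆ I i := by
        rw [hj']
        exact Finset.insert_subset hj'I (Finset.erase_subset _ _)
      have : I (i+1) = I i :=
        Finset.eq_of_subset_of_card_le hsub (le_of_eq (card_eq hI i (i+1)))
      rw [this] at hj1
      exact hj2 hj1
    have hcj : c = j' := by
      rw [hj'] at hj1
      rcases Finset.mem_insert.mp hj1 with he | hm
      · exact he
      · exact absurd (Finset.erase_subset _ _ hm) hj2
    rw [hfi, hcj]
    refine ⟨fun he => hj'notin (he ▸ hi), hi, hj'notin, hj'⟩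
  · left
    have hfi : fI I i = i := dif_neg hne
    have hempty : I (i+1) \ I i = ∅ := by
      rw [Finset.eq_empty_iff_forall_notMem]
      exact fun j hj => hne ⟨j, hj⟩
    have hsub : I (i+1) ⊆ I i := by
      intro j hj
      by_contra hj'
      exact (Finset.eq_empty_iff_forall_notMem.mp hempty j) (Finset.mem_sdiff.mpr ⟨hj, hj'⟩)
    exact ⟨Finset.eq_of_subset_of_card_le hsub (le_of_eq (card_eq hI i (i+1))), hfi⟩

open Fin.NatCast Fin.CommRing in
lemma persist [NeZero n] (hI : IsGrassmannNecklace I) (k r : Fin n) (m : ℕ) (hk : k ∈ I r)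
    (hcond : ∀ j : ℕ, j < m → r + (j : Fin n) = k → fI I k = k) :
    k ∈ I (r + (m : Fin n)) := by
  induction m with
  | zero => simpa using hk
  | succ p ih =>
    have hp : k ∈ I (r + (p : Fin n)) := ih (fun j hj => hcond j (by omega))
    have he : r + ((p+1 : ℕ) : Fin n) = (r + (p : Fin n)) + 1 := by push_cast; ring
    rw [he]
    rcases necklace_step hI (r + (p : Fin n)) with ⟨heq, _⟩ | ⟨hne, _, _, hins⟩
    · rwa [heq]
    · rw [hins]
      by_cases htk : r + (p : Fin n) = k
      · exact absurd (htk ▸ hcond p (by omega) htk) (htk ▸ hne)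
      · exact Finset.mem_insert_of_mem (Finset.mem_erase.mpr ⟨fun h => htk h.symm, hp⟩)

/-- `k ∈ I (b+1)` and `k ∉ I b` are contradictory when `fI I k = k`. -/
lemma no_reentry [NeZero n] (hI : IsGrassmannNecklace I) {k b : Fin n}
    (hfk : fI I k = k) (h1 : k ∈ I (b+1)) (h2 : k ∉ I b) : False := by
  have := persist hI k (b+1) ((b - (b+1) : Fin n) : ℕ) h1 (fun j _ _ => hfk)
  rw [fin_add_sub_val] at this
  exact h2 this

open Fin.NatCast Fin.CommRing in
/-- `k ∈ I (a+1)` and `k ∉ I b` are contradictory when the step `k` is not on the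
cyclic path from `a+1` to `b`. -/
lemma path_persist [NeZero n] (hI : IsGrassmannNecklace I) {k a b : Fin n}
    (h1 : k ∈ I (a+1)) (h2 : k ∉ I b)
    (hpath : ¬ shiftVal n (a+1) k < shiftVal n (a+1) b) : False := by
  have hm : ((b - (a+1) : Fin n) : ℕ) = shiftVal n (a+1) b := (shiftVal_eq_sub_val _ _).symm
  have := persist hI k (a+1) ((b - (a+1) : Fin n) : ℕ) h1 ?_
  · rw [fin_add_sub_val] at this
    exact h2 this
  · intro j hj he
    exfalso
    apply hpath
    have hjval : ((j : Fin n) : ℕ) = j := by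
      rw [Fin.val_natCast]
      exact Nat.mod_eq_of_lt (lt_trans (hm ▸ hj) (shiftVal_lt _ _))
    have : (j : Fin n) = k - (a+1) := by rw [← he]; ring
    have : shiftVal n (a+1) k = j := by
      rw [shiftVal_eq_sub_val, ← this, hjval]
    omega

lemma fI_injective [NeZero n] (hI : IsGrassmannNecklace I) : Function.Injective (fI I) := by
  intro a b hab
  by_contra hne
  rcases necklace_step hI a with ⟨haeq, hfa⟩ | ⟨hfa, haI, hfaI, hains⟩ <;>
    rcases necklace_step hI b with ⟨hbeq, hfb⟩ | ⟨hfb, hbI, hfbI, hbins⟩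
  · exact hne (hfa ▸ hfb ▸ hab)
  · have hkb : fI I b = a := hab ▸ hfa
    have h1 : a ∈ I (b+1) := by rw [hbins, ← hkb]; exact Finset.mem_insert_self _ _
    have h2 : a ∉ I b := hkb ▸ hfbI
    exact no_reentry hI hfa h1 h2
  · have hka : fI I a = b := hab.symm ▸ hfb
    have h1 : b ∈ I (a+1) := by rw [hains, ← hka]; exact Finset.mem_insert_self _ _
    have h2 : b ∉ I a := hka ▸ hfaI
    exact no_reentry hI hfb h1 h2
  · set k := fI I a with hk
    have hkb' : fI I b = k := hab.symm
    have hka : k ≠ a := by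
      intro he; exact hfaI (he ▸ haI)
    have hkbne : k ≠ b := by
      intro he; exact (hkb' ▸ hfbI : k ∉ I b) (he ▸ hbI)
    have h1a : k ∈ I (a+1) := by rw [hains]; exact Finset.mem_insert_self _ _
    have h1b : k ∈ I (b+1) := by rw [hbins, hkb']; exact Finset.mem_insert_self _ _
    have h2a : k ∉ I a := hfaI
    have h2b : k ∉ I b := hkb' ▸ hfbI
    by_cases hfk : fI I k = k
    · exact no_reentry hI hfk h1b h2b
    · have habne : a ≠ b := by
        intro he
        exact hne (he ▸ rfl)
      rcases not_and_or.mp (arith a b k habne hka hkbne) with hp | hp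
      · exact path_persist hI h1a h2b hp
      · exact path_persist hI h1b h2a hp

open Classical in
/-- The decorated permutation decoded from a Grassmann necklace. -/
noncomputable def sigmaOf [NeZero n] (hI : IsGrassmannNecklace I) : DecoratedPerm n where
  perm := Equiv.ofBijective (fI I) (Finite.injective_iff_bijective.mp (fI_injective hI))
  col := fun p => if p.1 ∈ I p.1 then false else true

lemma decodesTo_sigmaOf [NeZero n] (hI : IsGrassmannNecklace I) : DecodesTo I (sigmaOf hI) := by
  intro i
  have happ : (sigmaOf hI).perm i = fI I i := rfl
  by_cases h : fI I i = i
  · rw [dif_pos (happ.trans h)]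
    rcases necklace_step hI i with ⟨heq, _⟩ | ⟨hne, _, _, _⟩
    · refine ⟨heq, ?_⟩
      show (if i ∈ I i then false else true) = false ↔ i ∈ I i
      split
      · next hm => exact ⟨fun _ => hm, fun _ => rfl⟩
      · next hm => exact ⟨fun hf => absurd hf (by simp), fun hm' => absurd hm' hm⟩
    · exact absurd h hne
  · rw [dif_neg (fun he => h (happ.symm.trans he))]
    rcases necklace_step hI i with ⟨_, hfi⟩ | ⟨_, _, _, hins⟩
    · exact absurd hfi h
    · rw [happ]; exact hins

/-! ### Uniqueness of the decoded decorated permutation -/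

lemma decodes_sigma_unique [NeZero n] {I : Fin n → Finset (Fin n)}
    (h : DecodesTo I σ) (h' : DecodesTo I σ') : σ = σ' := by
  have hN : necklaceOf σ = I := decodes_necklace h
  have hN' : necklaceOf σ' = I := decodes_necklace h'
  have hperm : σ.perm = σ'.perm := by
    apply Equiv.ext
    intro i
    have hd := h i; have hd' := h' i
    by_cases h1 : σ.perm i = i <;> by_cases h2 : σ'.perm i = i
    · rw [h1, h2]
    · exfalso
      rw [dif_pos h1] at hd
      have hmem : i ∈ necklaceOf σ' i := self_mem_self h2
      have hnot : i ∉ necklaceOf σ' (i+1) := self_not_mem_succ h2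
      rw [hN'] at hmem hnot
      rw [hd.1] at hnot
      exact hnot hmem
    · exfalso
      rw [dif_pos h2] at hd'
      have hmem : i ∈ necklaceOf σ i := self_mem_self h1
      have hnot : i ∉ necklaceOf σ (i+1) := self_not_mem_succ h1
      rw [hN] at hmem hnot
      rw [hd'.1] at hnot
      exact hnot hmem
    · rw [dif_neg h1] at hd
      rw [dif_neg h2] at hd'
      have hmem : σ.perm i ∈ I (i+1) := by rw [hd]; exact Finset.mem_insert_self _ _
      rw [hd'] at hmem
      rcases Finset.mem_insert.mp hmem with he | hm
      · exact he
      · exfalso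
        have : σ.perm i ∈ I i := Finset.mem_of_mem_erase hm
        rw [← hN] at this
        exact perm_not_mem_self h1 this
  obtain ⟨p, c⟩ := σ
  obtain ⟨p', c'⟩ := σ'
  dsimp at hperm
  subst hperm
  have hcol : c = c' := by
    funext x
    obtain ⟨i, hi⟩ := x
    have hd := h i; have hd' := h' i
    rw [dif_pos hi] at hd hd'
    have : (c ⟨i, hi⟩ = false) ↔ (c' ⟨i, hi⟩ = false) := hd.2.trans hd'.2.symm
    rcases Bool.eq_false_or_eq_true (c ⟨i, hi⟩) with hb | hb <;>
      rcases Bool.eq_false_or_eq_true (c' ⟨i, hi⟩) with hb' | hb' <;>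
        simp_all
  rw [hcol]

end GNProof

/-- The maps `π° ↦ I(π°)` and `I ↦ π°(I)` are mutually inverse, giving a bijection between
decorated permutations of size `n` and Grassmann necklaces of size `n`. -/
theorem decoratedPerm_grassmannNecklace_bijection (n : ℕ) [NeZero n] :
    (∀ σ : DecoratedPerm n,
      IsGrassmannNecklace (necklaceOf σ) ∧ DecodesTo (necklaceOf σ) σ) ∧
    (∀ I : Fin n → Finset (Fin n), IsGrassmannNecklace I →
      ∃! σ : DecoratedPerm n, DecodesTo I σ) ∧
    (∀ (I : Fin n → Finset (Fin n)) (σ : DecoratedPerm n),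
      IsGrassmannNecklace I → DecodesTo I σ → necklaceOf σ = I) := by
  refine ⟨fun σ => ⟨GNProof.grassmann_necklaceOf σ, GNProof.decodesTo_necklaceOf σ⟩,
    fun I hI => ⟨GNProof.sigmaOf hI, GNProof.decodesTo_sigmaOf hI,
      fun σ' h' => GNProof.decodes_sigma_unique h' (GNProof.decodesTo_sigmaOf hI)⟩,
    fun I σ hI hd => GNProof.decodes_necklace hd⟩
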